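/- Let G be a locally compact second countable, compactly generated group with compact symmetric generating set S, and let μ and ν be cohomologically adapted probability measures on G. Let p > 1 and c > 0, let E be a real Banach space satisfying the (p,c)-uniform convexity inequality with duality map J, let π : G → O(E) be a strongly continuous isometric linear representation, and let b ∈ Z¹(G, π) be a 1-cocycle. Then ∫_G ‖b(g)‖^p d(μ∗ν)(g) ≥ c·∫_G ‖b(g)‖^p dμ(g) + ∫_G ‖b(g)‖^p dν(g) − p·⟨ ∫_G b(g) dμ(g), ∫_G (b(h))^{*_p} dν(h) ⟩, where μ∗ν is the convolution of μ and ν, x^{*_p} := ‖x‖^{p−2}·Jx (with 0^{*_p} = 0), and ⟨·,·⟩ is the pairing between E and its dual E*. -/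

import Mathlib

open Pointwise
open scoped ENNReal

noncomputable section

/-- The word length of `g` with respect to a generating set `S`:
`|g|_S = min {n : g ∈ Sⁿ}`. -/
def wordLength {G : Type*} [Monoid G] (S : Set G) (g : G) : ℕ :=
  sInf {n : ℕ | g ∈ S ^ n}

/-- The `n`-fold convolution power `μ^{*n}` of a measure on a group
(with `μ^{*0} = δ₁`). -/
def convPow {G : Type*} [Monoid G] [MeasurableSpace G]
    (μ : MeasureTheory.Measure G) : ℕ → MeasureTheory.Measure G
  | 0 => MeasureTheory.Measure.dirac 1
  | n + 1 => MeasureTheory.Measure.map (fun q : G × G => q.1 * q.2)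
      ((convPow μ n).prod μ)

/-- A Borel probability measure `μ` on a locally compact compactly generated group `G`
with compact symmetric generating set `S` is cohomologically adapted if it is symmetric,
absolutely continuous with respect to the Haar measure, its support contains `S`, its
density is essentially bounded below by a positive constant on `S`, and it has finite
`p`-moments for all `1 ≤ p < ∞`. -/
structure CohomologicallyAdapted {G : Type*} [Group G] [TopologicalSpace G]
    [IsTopologicalGroup G] [LocallyCompactSpace G] [MeasurableSpace G] [BorelSpace G]
    (S : Set G) (μ : MeasureTheory.Measure G) : Prop where
  isProb : MeasureTheory.IsProbabilityMeasure μ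
  symmetric : MeasureTheory.Measure.map (fun g => g⁻¹) μ = μ
  absCont : μ.AbsolutelyContinuous MeasureTheory.Measure.haar
  suppContains : ∀ g ∈ S, ∀ U : Set G, IsOpen U → g ∈ U → 0 < μ U
  densityBounded : ∃ ε : ℝ≥0∞, 0 < ε ∧
    ∀ᵐ x ∂((MeasureTheory.Measure.haar : MeasureTheory.Measure G).restrict S),
      ε ≤ μ.rnDeriv MeasureTheory.Measure.haar x
  finiteMoments : ∀ p : ℝ, 1 ≤ p →
    MeasureTheory.Integrable (fun g => (wordLength S g : ℝ) ^ p) μ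

/-- Convolution of two measures on a group: the pushforward of the product measure
under multiplication. -/
def mconv {G : Type*} [Monoid G] [MeasurableSpace G]
    (μ ν : MeasureTheory.Measure G) : MeasureTheory.Measure G :=
  MeasureTheory.Measure.map (fun q : G × G => q.1 * q.2) (μ.prod ν)

open Classical in
/-- `x^{*_p} = ‖x‖^{p−2}·Jx` for `x ≠ 0`, and `0^{*_p} = 0`. -/
def starMap {E : Type*} [NormedAddCommGroup E] [NormedSpace ℝ E]
    (J : E → StrongDual ℝ E) (p : ℝ) (x : E) : StrongDual ℝ E :=
  if x = 0 then 0 else ‖x‖ ^ (p - 2) • J x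

/-- `E` satisfies the `(p,c)`-uniform convexity inequality with duality map `J`:
`J` is continuous, `⟨x, Jx⟩ = ‖x‖²`, `‖Jx‖ = ‖x‖` and
`‖x+y‖^p ≥ ‖x‖^p + p⟨y, x^{*_p}⟩ + c‖y‖^p`. -/
structure IsConvexDualityMap {E : Type*} [NormedAddCommGroup E] [NormedSpace ℝ E]
    (p c : ℝ) (J : E → StrongDual ℝ E) : Prop where
  continuous : Continuous J
  pairing : ∀ x : E, J x x = ‖x‖ ^ 2
  norm_eq : ∀ x : E, ‖J x‖ = ‖x‖
  ineq : ∀ x y : E, ‖x‖ ^ p + p * starMap J p x y + c * ‖y‖ ^ p ≤ ‖x + y‖ ^ p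


section AuxLemmas

open MeasureTheory

lemma norm_starMap {E : Type*} [NormedAddCommGroup E] [NormedSpace ℝ E]
    {J : E → StrongDual ℝ E} {p : ℝ} (hp : 1 < p)
    (hJnorm : ∀ x, ‖J x‖ = ‖x‖) (x : E) :
    ‖starMap J p x‖ = ‖x‖ ^ (p - 1) := by
  rcases eq_or_ne x 0 with rfl | hx
  · simp [starMap, Real.zero_rpow (by linarith : p - 1 ≠ 0)]
  · have hxn : (0:ℝ) < ‖x‖ := norm_pos_iff.mpr hx
    rw [starMap, if_neg hx, norm_smul, hJnorm, Real.norm_of_nonneg (Real.rpow_nonneg hxn.le _)]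
    rw [← Real.rpow_add_one hxn.ne' (p - 2)]
    ring_nf

lemma continuous_starMap {E : Type*} [NormedAddCommGroup E] [NormedSpace ℝ E]
    {J : E → StrongDual ℝ E} {p : ℝ} (hp : 1 < p)
    (hJcont : Continuous J) (hJnorm : ∀ x, ‖J x‖ = ‖x‖) :
    Continuous (starMap J p) := by
  rw [continuous_iff_continuousAt]
  intro x
  rcases eq_or_ne x 0 with rfl | hx
  · have h0 : starMap J p 0 = 0 := by simp [starMap]
    rw [ContinuousAt, h0]
    apply squeeze_zero_norm (a := fun y : E => ‖y‖ ^ (p - 1))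
    · intro y; exact le_of_eq (norm_starMap hp hJnorm y)
    · have : ContinuousAt (fun y : E => ‖y‖ ^ (p - 1)) 0 :=
        (Real.continuousAt_rpow_const _ _ (Or.inr (by linarith))).comp
          continuous_norm.continuousAt
      rw [ContinuousAt] at this
      have h00 : ‖(0 : E)‖ ^ (p - 1) = 0 := by
        simp [Real.zero_rpow (by linarith : p - 1 ≠ 0)]
      rwa [h00] at this
  · have hev : ∀ᶠ y in nhds x, (fun y => ‖y‖ ^ (p - 2) • J y) y = starMap J p y := by
      filter_upwards [isOpen_compl_singleton.mem_nhds hx] with y hy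
      simp only [Set.mem_compl_iff, Set.mem_singleton_iff] at hy
      simp [starMap, hy]
    exact ContinuousAt.congr
      (((Real.continuousAt_rpow_const _ _ (Or.inl (norm_ne_zero_iff.mpr hx))).comp
        continuous_norm.continuousAt).smul hJcont.continuousAt) hev

lemma rpow_pred_le_aux {a p : ℝ} (ha : 0 ≤ a) (hp : 1 < p) :
    a ^ (p - 1) ≤ 1 + a ^ p := by
  rcases le_total a 1 with h | h
  · have := Real.rpow_le_one ha h (by linarith : (0:ℝ) ≤ p - 1)
    nlinarith [Real.rpow_nonneg ha p]
  · have := Real.rpow_le_rpow_of_exponent_le h (by linarith : p - 1 ≤ p)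
    linarith

lemma add_rpow_le_two_rpow_aux {a b p : ℝ} (ha : 0 ≤ a) (hb : 0 ≤ b) (hp : 0 ≤ p) :
    (a + b) ^ p ≤ 2 ^ p * (a ^ p + b ^ p) := by
  have h1 : a + b ≤ 2 * max a b := by
    have := le_max_left a b; have := le_max_right a b; linarith
  have h2 : (max a b) ^ p ≤ a ^ p + b ^ p := by
    rcases le_total a b with h | h
    · rw [max_eq_right h]; nlinarith [Real.rpow_nonneg ha p]
    · rw [max_eq_left h]; nlinarith [Real.rpow_nonneg hb p]
  calc (a + b) ^ p ≤ (2 * max a b) ^ p :=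
        Real.rpow_le_rpow (by positivity) h1 hp
    _ = 2 ^ p * (max a b) ^ p := Real.mul_rpow (by norm_num) (le_max_of_le_left ha)
    _ ≤ 2 ^ p * (a ^ p + b ^ p) := by
        have : (0:ℝ) ≤ 2 ^ p := Real.rpow_nonneg (by norm_num) p
        nlinarith

lemma norm_cocycle_le_aux {G : Type*} [Group G] [TopologicalSpace G]
    {E : Type*} [NormedAddCommGroup E] [NormedSpace ℝ E]
    (S : Set G) (hSgen : ∀ g : G, ∃ n : ℕ, g ∈ S ^ n)
    (π : G →* (E ≃ₗᵢ[ℝ] E)) (b : G → E)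
    (hcoc : ∀ g h : G, b (g * h) = b g + π g (b h))
    {M : ℝ} (hM : ∀ s ∈ S, ‖b s‖ ≤ M) (g : G) :
    ‖b g‖ ≤ M * (wordLength S g : ℝ) := by
  have hb1 : b 1 = 0 := by
    have h := hcoc 1 1
    rw [one_mul, map_one] at h
    simpa using h
  have key : ∀ n : ℕ, ∀ g ∈ S ^ n, ‖b g‖ ≤ M * (n : ℝ) := by
    intro n
    induction n with
    | zero =>
      intro g hg
      rw [pow_zero, Set.mem_one] at hg
      subst hg
      simp [hb1]
    | succ n ih =>
      intro g hg
      rw [pow_succ] at hg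
      rcases Set.mem_mul.mp hg with ⟨a, ha, s, hs, rfl⟩
      rw [hcoc a s]
      calc ‖b a + (π a) (b s)‖ ≤ ‖b a‖ + ‖(π a) (b s)‖ := norm_add_le _ _
        _ = ‖b a‖ + ‖b s‖ := by rw [LinearIsometryEquiv.norm_map]
        _ ≤ M * (n : ℝ) + M := add_le_add (ih a ha) (hM s hs)
        _ = M * ((n + 1 : ℕ) : ℝ) := by push_cast; ring
  exact key _ g (Nat.sInf_mem (hSgen g))

lemma integrable_rpow_norm_cocycle_aux {G : Type*} [Group G] [TopologicalSpace G]
    [IsTopologicalGroup G] [LocallyCompactSpace G] [MeasurableSpace G] [BorelSpace G]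
    {E : Type*} [NormedAddCommGroup E] [NormedSpace ℝ E]
    {S : Set G} {κ : MeasureTheory.Measure G} (hκ : CohomologicallyAdapted S κ)
    {b : G → E} (hb : Continuous b)
    {M : ℝ} (hM : ∀ g, ‖b g‖ ≤ M * (wordLength S g : ℝ)) (hM0 : 0 ≤ M)
    {q : ℝ} (hq : 1 ≤ q) :
    MeasureTheory.Integrable (fun g => ‖b g‖ ^ q) κ := by
  refine Integrable.mono' ((hκ.finiteMoments q hq).const_mul (M ^ q))
    (((Real.continuous_rpow_const (by linarith)).comp hb.norm).aestronglyMeasurable)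
    (Filter.Eventually.of_forall fun g => ?_)
  rw [Real.norm_of_nonneg (Real.rpow_nonneg (norm_nonneg _) q)]
  calc ‖b g‖ ^ q ≤ (M * (wordLength S g : ℝ)) ^ q :=
        Real.rpow_le_rpow (norm_nonneg _) (hM g) (by linarith)
    _ = M ^ q * (wordLength S g : ℝ) ^ q := Real.mul_rpow hM0 (Nat.cast_nonneg _)

end AuxLemmas

/- STATEMENT 11: the convolution inequality for 1-cocycles on a smooth
`(p,c)`-uniformly convex Banach space:
`‖b‖_{L^p(μ∗ν)}^p ≥ c‖b‖_{L^p(μ)}^p + ‖b‖_{L^p(ν)}^p − p⟨b(μ), ∫ b(h)^{*_p} dν(h)⟩`. -/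
open MeasureTheory in
theorem cocycle_convolution_inequality
    {G : Type*} [Group G] [TopologicalSpace G] [IsTopologicalGroup G]
    [LocallyCompactSpace G] [SecondCountableTopology G]
    [MeasurableSpace G] [BorelSpace G]
    (S : Set G) (hScpt : IsCompact S) (hSsymm : S⁻¹ = S)
    (hSgen : ∀ g : G, ∃ n : ℕ, g ∈ S ^ n)
    (μ ν : MeasureTheory.Measure G)
    (hμ : CohomologicallyAdapted S μ) (hν : CohomologicallyAdapted S ν)
    (p c : ℝ) (hp : 1 < p) (hc : 0 < c)
    {E : Type*} [NormedAddCommGroup E] [NormedSpace ℝ E] [CompleteSpace E]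
    (J : E → StrongDual ℝ E) (hJ : IsConvexDualityMap p c J)
    (π : G →* (E ≃ₗᵢ[ℝ] E)) (hπ : ∀ x : E, Continuous fun g : G => π g x)
    (b : G → E) (hb : Continuous b)
    (hcoc : ∀ g h : G, b (g * h) = b g + π g (b h)) :
    c * (∫ g, ‖b g‖ ^ p ∂μ) + (∫ g, ‖b g‖ ^ p ∂ν)
        - p * (∫ h, starMap J p (b h) ∂ν) (∫ g, b g ∂μ)
      ≤ ∫ g, ‖b g‖ ^ p ∂(mconv μ ν) := by
  classical
  haveI : MeasureTheory.IsProbabilityMeasure μ := hμ.isProb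
  haveI : MeasureTheory.IsProbabilityMeasure ν := hν.isProb
  open MeasureTheory in
  haveI : SecondCountableTopologyEither G (StrongDual ℝ E) :=
    secondCountableTopologyEither_of_left G _
  have hp0 : (0:ℝ) ≤ p := by linarith
  -- cocycle facts
  have hb1 : b 1 = 0 := by
    have h := hcoc 1 1
    rw [one_mul, map_one] at h
    simpa using h
  have hbinv : ∀ g : G, b g⁻¹ = -((π g⁻¹) (b g)) := by
    intro g
    have h := hcoc g⁻¹ g
    rw [inv_mul_cancel, hb1] at h
    exact eq_neg_of_add_eq_zero_left h.symm
  have hnormeq : ∀ g h : G, ‖b (g⁻¹ * h)‖ = ‖b h - b g‖ := by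
    intro g h
    rw [hcoc g⁻¹ h, hbinv g]
    have h2 : -((π g⁻¹) (b g)) + (π g⁻¹) (b h) = (π g⁻¹) (b h - b g) := by
      rw [map_sub]; abel
    rw [h2, LinearIsometryEquiv.norm_map]
  -- word-length bound
  obtain ⟨M₀, hM₀⟩ := hScpt.exists_bound_of_continuousOn hb.continuousOn
  set M := max M₀ 0 with hMdef
  have hM0 : (0:ℝ) ≤ M := le_max_right _ _
  have hword : ∀ g, ‖b g‖ ≤ M * (wordLength S g : ℝ) :=
    norm_cocycle_le_aux S hSgen π b hcoc
      (fun s hs => (hM₀ s hs).trans (le_max_left _ _))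
  -- integrabilities
  have Iμp : Integrable (fun g => ‖b g‖ ^ p) μ :=
    integrable_rpow_norm_cocycle_aux hμ hb hword hM0 hp.le
  have Iνp : Integrable (fun g => ‖b g‖ ^ p) ν :=
    integrable_rpow_norm_cocycle_aux hν hb hword hM0 hp.le
  have Ibμ : Integrable b μ := by
    have hn : Integrable (fun g => (wordLength S g : ℝ)) μ := by
      have := hμ.finiteMoments 1 le_rfl
      simpa [Real.rpow_one] using this
    exact Integrable.mono' (hn.const_mul M) hb.aestronglyMeasurable
      (Filter.Eventually.of_forall fun g => hword g)
  have hcontSt : Continuous fun h => starMap J p (b h) :=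
    (continuous_starMap hp hJ.continuous hJ.norm_eq).comp hb
  have Istar : Integrable (fun h => starMap J p (b h)) ν := by
    refine Integrable.mono' ((integrable_const (1:ℝ)).add Iνp)
      hcontSt.aestronglyMeasurable (Filter.Eventually.of_forall fun h => ?_)
    rw [norm_starMap hp hJ.norm_eq]
    exact rpow_pred_le_aux (norm_nonneg _) hp
  -- product integrabilities
  have P1 : Integrable (fun z : G × G => ‖b z.1‖ ^ p) (μ.prod ν) := by
    have := Iμp.mul_prod (integrable_const (1:ℝ)) (ν := ν)
    simpa using this
  have P2 : Integrable (fun z : G × G => ‖b z.2‖ ^ p) (μ.prod ν) := by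
    have := (integrable_const (1:ℝ)).mul_prod Iνp (μ := μ)
    simpa using this
  have contApply : Continuous fun z : G × G => (starMap J p (b z.2)) (b z.1) := by
    have h1 : Continuous fun z : G × G => (starMap J p (b z.2), b z.1) :=
      ((hcontSt.comp continuous_snd)).prodMk (hb.comp continuous_fst)
    exact (isBoundedBilinearMap_apply (𝕜 := ℝ) (E := E) (F := ℝ)).continuous.comp h1
  have P3 : Integrable (fun z : G × G => (starMap J p (b z.2)) (b z.1)) (μ.prod ν) := by
    refine Integrable.mono' (Ibμ.norm.mul_prod Istar.norm)
      contApply.aestronglyMeasurable (Filter.Eventually.of_forall fun z => ?_)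
    exact ((starMap J p (b z.2)).le_opNorm (b z.1)).trans (le_of_eq (mul_comm _ _))
  have P4 : Integrable (fun z : G × G => ‖b z.2 - b z.1‖ ^ p) (μ.prod ν) := by
    refine Integrable.mono' ((P1.add P2).const_mul (2 ^ p))
      (((Real.continuous_rpow_const hp0).comp
        ((hb.comp continuous_snd).sub (hb.comp continuous_fst)).norm).aestronglyMeasurable)
      (Filter.Eventually.of_forall fun z => ?_)
    rw [Real.norm_of_nonneg (Real.rpow_nonneg (norm_nonneg _) p)]
    calc ‖b z.2 - b z.1‖ ^ p ≤ (‖b z.2‖ + ‖b z.1‖) ^ p :=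
          Real.rpow_le_rpow (norm_nonneg _) (norm_sub_le _ _) hp0
      _ ≤ 2 ^ p * (‖b z.2‖ ^ p + ‖b z.1‖ ^ p) :=
          add_rpow_le_two_rpow_aux (norm_nonneg _) (norm_nonneg _) hp0
      _ = 2 ^ p * (‖b z.1‖ ^ p + ‖b z.2‖ ^ p) := by ring
  -- pointwise inequality
  have key : ∀ z : G × G,
      c * ‖b z.1‖ ^ p + ‖b z.2‖ ^ p - p * (starMap J p (b z.2)) (b z.1)
        ≤ ‖b z.2 - b z.1‖ ^ p := by
    intro z
    have h := hJ.ineq (b z.2) (-(b z.1))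
    rw [norm_neg] at h
    have h2 : (starMap J p (b z.2)) (-(b z.1)) = -((starMap J p (b z.2)) (b z.1)) :=
      map_neg _ _
    have h3 : b z.2 + -(b z.1) = b z.2 - b z.1 := (sub_eq_add_neg _ _).symm
    rw [h2, h3] at h
    linarith
  -- chain of equalities
  have step1 : ∫ g, ‖b g‖ ^ p ∂(mconv μ ν)
      = ∫ z : G × G, ‖b (z.1 * z.2)‖ ^ p ∂(μ.prod ν) := by
    unfold mconv
    exact integral_map continuous_mul.measurable.aemeasurable
      ((Real.continuous_rpow_const hp0).comp hb.norm).aestronglyMeasurable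
  have hswap : μ.prod ν
      = Measure.map (Prod.map (fun g : G => g⁻¹) id) (μ.prod ν) := by
    have h1 := Measure.map_prod_map (f := fun g : G => g⁻¹) (g := (id : G → G))
      μ ν measurable_inv measurable_id
    rw [hμ.symmetric, Measure.map_id] at h1
    exact h1
  have step2 : ∫ z : G × G, ‖b (z.1 * z.2)‖ ^ p ∂(μ.prod ν)
      = ∫ z : G × G, ‖b (z.1⁻¹ * z.2)‖ ^ p ∂(μ.prod ν) := by
    conv_lhs => rw [hswap]
    rw [integral_map (measurable_inv.prodMap measurable_id).aemeasurable]
    · rfl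
    · rw [← hswap]
      exact ((Real.continuous_rpow_const hp0).comp
        ((hb.comp continuous_mul).norm)).aestronglyMeasurable
  have step3 : ∫ z : G × G, ‖b (z.1⁻¹ * z.2)‖ ^ p ∂(μ.prod ν)
      = ∫ z : G × G, ‖b z.2 - b z.1‖ ^ p ∂(μ.prod ν) :=
    integral_congr_ae (Filter.Eventually.of_forall fun z =>
      congrArg (fun t : ℝ => t ^ p) (hnormeq z.1 z.2))
  -- integral comparison
  have step4 :
      ∫ z : G × G, (c * ‖b z.1‖ ^ p + ‖b z.2‖ ^ p - p * (starMap J p (b z.2)) (b z.1))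
          ∂(μ.prod ν)
        ≤ ∫ z : G × G, ‖b z.2 - b z.1‖ ^ p ∂(μ.prod ν) :=
    integral_mono (((P1.const_mul c).add P2).sub (P3.const_mul p)) P4 key
  -- computing the left integral
  have comp1 : ∫ z : G × G, ‖b z.1‖ ^ p ∂(μ.prod ν) = ∫ g, ‖b g‖ ^ p ∂μ := by
    rw [integral_prod _ P1]
    simp
  have comp2 : ∫ z : G × G, ‖b z.2‖ ^ p ∂(μ.prod ν) = ∫ h, ‖b h‖ ^ p ∂ν := by
    rw [integral_prod _ P2]
    simp
  have comp3 : ∫ z : G × G, (starMap J p (b z.2)) (b z.1) ∂(μ.prod ν)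
      = (∫ h, starMap J p (b h) ∂ν) (∫ g, b g ∂μ) := by
    rw [integral_prod _ P3]
    have hinner : ∀ g : G,
        (∫ h, (starMap J p (b h)) (b g) ∂ν) = (∫ h, starMap J p (b h) ∂ν) (b g) :=
      fun g => (ContinuousLinearMap.integral_apply Istar (b g)).symm
    simp_rw [hinner]
    exact ContinuousLinearMap.integral_comp_comm _ Ibμ
  have expand :
      ∫ z : G × G, (c * ‖b z.1‖ ^ p + ‖b z.2‖ ^ p - p * (starMap J p (b z.2)) (b z.1))
          ∂(μ.prod ν)
        = c * (∫ g, ‖b g‖ ^ p ∂μ) + (∫ g, ‖b g‖ ^ p ∂ν)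
            - p * (∫ h, starMap J p (b h) ∂ν) (∫ g, b g ∂μ) := by
    have Q1 : Integrable (fun z : G × G => c * ‖b z.1‖ ^ p) (μ.prod ν) := P1.const_mul c
    have Q3 : Integrable (fun z : G × G => p * (starMap J p (b z.2)) (b z.1)) (μ.prod ν) :=
      P3.const_mul p
    have Q12 : Integrable (fun z : G × G => c * ‖b z.1‖ ^ p + ‖b z.2‖ ^ p) (μ.prod ν) :=
      Q1.add P2
    rw [integral_sub Q12 Q3, integral_add Q1 P2, integral_const_mul, integral_const_mul,
      comp1, comp2, comp3]
  rw [step1, step2, step3, ← expand]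
  exact step4
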